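/- Define, for ultrafilters u, v on ℤ: u ∣ˢ v iff D(v) = {n : nℤ ∈ v} belongs to u. Then ∣ˢ is transitive: if u ∣ˢ v and v ∣ˢ t then u ∣ˢ t. Moreover, u ∣ˢ u holds if and only if u is self-divisible. -/
import Mathlib

/-- `D u` is the set of integers dividing the ultrafilter `u`. -/
def D (u : Ultrafilter ℤ) : Set ℤ := {n : ℤ | {x : ℤ | n ∣ x} ∈ u}

/-- Strong divisibility of ultrafilters: `u ∣ˢ v` iff `D v ∈ u`. -/
def SDvd (u v : Ultrafilter ℤ) : Prop := D v ∈ u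

/-- An ultrafilter `w` is self-divisible iff `D w ∈ w`. -/
def SelfDivisible (w : Ultrafilter ℤ) : Prop := D w ∈ w

theorem stmt_14 :
    (∀ u v t : Ultrafilter ℤ, SDvd u v → SDvd v t → SDvd u t) ∧
    (∀ u : Ultrafilter ℤ, SDvd u u ↔ SelfDivisible u) := by
  constructor
  · intro u v t huv hvt
    have hsub : D v ⊆ D t := by
      intro n hn
      have h1 : {x : ℤ | n ∣ x} ∩ D t ∈ v := (v : Filter ℤ).inter_sets hn hvt
      obtain ⟨m, hnm, hmt⟩ := Ultrafilter.nonempty_of_mem h1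
      exact Filter.mem_of_superset hmt (fun x hx => hnm.trans hx)
    exact Filter.mem_of_superset huv hsub
  · intro u; exact Iff.rfl
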